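/- For n ≥ d ≥ 1 and ⌈d/2⌉ ≤ k ≤ d, the number of k-faces of the dual cyclic polytope satisfies f_k(c*(n,d)) = C(n, d-k). -/

import Mathlib

/-- Hockey-stick Vandermonde: `∑ r ≤ s, C(r,a)·C(s-r,b) = C(s+1, a+b+1)`. -/
lemma sum_choose_mul_choose_sub (a : ℕ) :
    ∀ s b : ℕ, ∑ r ∈ Finset.range (s + 1), r.choose a * (s - r).choose b
      = (s + 1).choose (a + b + 1) := by
  intro s
  induction s with
  | zero =>
    intro b
    rcases a with _ | a <;> rcases b with _ | b <;> simp [Nat.choose]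
  | succ s ih =>
    intro b
    rw [Finset.sum_range_succ]
    rcases b with _ | b
    · have h1 : ∀ r ∈ Finset.range (s + 1),
          r.choose a * (s + 1 - r).choose 0 = r.choose a * (s - r).choose 0 := by
        intro r _; simp
      rw [Finset.sum_congr rfl h1, ih 0]
      have h2 := Nat.choose_succ_succ' (s + 1) a
      simp only [Nat.choose_zero_right, mul_one, Nat.add_zero]
      omega
    · have h1 : ∀ r ∈ Finset.range (s + 1),
          r.choose a * (s + 1 - r).choose (b + 1)
            = r.choose a * (s - r).choose b + r.choose a * (s - r).choose (b + 1) := by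
        intro r hr
        rw [Finset.mem_range] at hr
        have : s + 1 - r = (s - r) + 1 := by omega
        rw [this, Nat.choose_succ_succ, Nat.mul_add]
      rw [Finset.sum_congr rfl h1, Finset.sum_add_distrib, ih b, ih (b + 1)]
      have h2 := Nat.choose_succ_succ' (s + 1) (a + b + 1)
      have e1 : a + (b + 1) + 1 = a + b + 1 + 1 := by ring
      have e2 : a + (b + 1) + 1 = a + b + 2 := by ring
      simp only [Nat.choose_succ_succ', e1, e2, Nat.choose_zero_right,
        Nat.choose_succ_succ _ b |>.symm]
      simp

/-- For `n ≥ d ≥ 1` and `⌈d/2⌉ ≤ k ≤ d`, McMullen's formula for the number of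
`k`-faces of the dual cyclic polytope `c*(n,d)` simplifies to `C(n, d-k)`. -/
theorem dualCyclic_faces_high_dim (n d k : ℕ) (hd : 1 ≤ d) (hdn : d ≤ n)
    (hk1 : (d + 1) / 2 ≤ k) (hk2 : k ≤ d) :
    (∑ r ∈ Finset.Icc (min k ((d + 1) / 2)) ((d + 1) / 2 - 1),
        (n - d - 1 + r).choose r * r.choose k) +
      (∑ r ∈ Finset.Icc (max k ((d + 1) / 2)) d,
        (n - r - 1).choose (d - r) * r.choose k) = n.choose (d - k) := by
  have hm : 1 ≤ (d + 1) / 2 := by omega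
  have hk : 1 ≤ k := le_trans hm hk1
  -- first sum is empty
  have h1 : Finset.Icc (min k ((d + 1) / 2)) ((d + 1) / 2 - 1) = ∅ := by
    apply Finset.Icc_eq_empty
    omega
  rw [h1, Finset.sum_empty, Nat.zero_add, max_eq_left hk1]
  rcases Nat.lt_or_ge d n with hlt | hge
  · -- n ≥ d + 1
    have key := sum_choose_mul_choose_sub k (n - 1) (n - 1 - d)
    have hn1 : n - 1 + 1 = n := by omega
    rw [hn1] at key
    have hexp : k + (n - 1 - d) + 1 = n - (d - k) := by omega
    rw [hexp, Nat.choose_symm (by omega : d - k ≤ n)] at key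
    rw [← key]
    -- extend Icc k d to range n
    rw [Finset.range_eq_Ico,
      show Finset.Ico 0 n = Finset.Icc 0 (n - 1) from by rw [Nat.Ico_zero_eq_range]; ext x; simp; omega]
    rw [← Finset.sum_subset (Finset.Icc_subset_Icc (Nat.zero_le k) (by omega : d ≤ n - 1))]
    · apply Finset.sum_congr rfl
      intro r hr
      rw [Finset.mem_Icc] at hr
      rw [mul_comm]
      congr 1
      have e1 : n - r - 1 = n - 1 - r := by omega
      have hc : d - r ≤ n - 1 - r := by omega
      rw [e1, ← Nat.choose_symm hc,
        show n - 1 - r - (d - r) = n - 1 - d from by omega]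
    · intro r hr hnr
      rw [Finset.mem_Icc] at hr hnr
      rcases Nat.lt_or_ge r k with h | h
      · simp [Nat.choose_eq_zero_of_lt h]
      · have hrd : d < r := by omega
        have : n - 1 - r < n - 1 - d := by omega
        rw [mul_comm]
        simp [Nat.choose_eq_zero_of_lt this,
          show n - r - 1 = n - 1 - r from by omega]
  · -- n = d
    have hnd : n = d := le_antisymm hge hdn
    subst hnd
    rw [Finset.sum_eq_single n]
    · simp [Nat.choose_symm hk2]
    · intro r hr hne
      rw [Finset.mem_Icc] at hr
      have : n - r - 1 < n - r := by omega
      simp [Nat.choose_eq_zero_of_lt (show n - r - 1 < n - r by omega),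
        show n - r ≠ 0 from by omega]
    · intro h
      rw [Finset.mem_Icc] at h
      omega
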